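/- Let X ⊂ ℝ^d be a compact domain, Leb the Lebesgue measure restricted to X normalized to mass 1, and (P_1, …, P_N) a measurable partition of X with Leb(P_j) = 1/N for each j; let b_j := N·∫_{P_j} x dx be the barycenter of P_j, and set ν_N := (1/N)Σ_j δ_{b_j}. Let y_1, …, y_N ∈ ℝ^d and η_N := (1/N)Σ_j δ_{y_j}. Then there exists a permutation σ of {1, …, N} such that Σ_{1≤j≤N} ∫_{P_{σ(j)}} |y_j − x|² dx ≤ Σ_{1≤j≤N} ∫_{P_j} |b_j − x|² dx + W₂²(ν_N, η_N). In particular, if each P_j has diameter at most C_P·N^{−1/d}, the left-hand side is at most C_P²·N^{−2/d} + W₂²(ν_N, η_N). -/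

import Mathlib

open MeasureTheory
open scoped ENNReal NNReal

noncomputable section

abbrev Euc (d : ℕ) := EuclideanSpace ℝ (Fin d)

/-- Squared quadratic Wasserstein distance. -/
def W2sq {α : Type*} [MeasurableSpace α] [PseudoEMetricSpace α] (η ν : Measure α) : ℝ≥0∞ :=
  ⨅ (π : Measure (α × α)) (_ : π.map Prod.fst = η ∧ π.map Prod.snd = ν),
    ∫⁻ p, edist p.1 p.2 ^ 2 ∂π

lemma perm_le_of_doublyStochastic {n : ℕ} {M : Matrix (Fin n) (Fin n) ℝ}
    (hM : M ∈ doublyStochastic ℝ (Fin n)) (c : Fin n → Fin n → ℝ) :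
    ∃ σ : Equiv.Perm (Fin n), ∑ i, c i (σ i) ≤ ∑ i, ∑ j, M i j * c i j := by
  obtain ⟨w, hw0, hw1, hwM⟩ := exists_eq_sum_perm_of_mem_doublyStochastic hM
  have hperm : ∀ τ : Equiv.Perm (Fin n),
      ∑ i, ∑ j, (τ.permMatrix ℝ) i j * c i j = ∑ i, c i (τ i) := by
    intro τ
    refine Finset.sum_congr rfl fun i _ => ?_
    rw [Finset.sum_eq_single (τ i)]
    · simp [Equiv.Perm.permMatrix, PEquiv.toMatrix_apply, Equiv.toPEquiv_apply]
    · intro j _ hj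
      simp [Equiv.Perm.permMatrix, PEquiv.toMatrix_apply, Equiv.toPEquiv_apply, Ne.symm hj]
    · simp
  have hS : ∑ i, ∑ j, M i j * c i j = ∑ τ : Equiv.Perm (Fin n), w τ * ∑ i, c i (τ i) := by
    calc ∑ i, ∑ j, M i j * c i j
        = ∑ i, ∑ j, ∑ τ : Equiv.Perm (Fin n), w τ * ((τ.permMatrix ℝ) i j * c i j) := by
          rw [← hwM]
          refine Finset.sum_congr rfl fun i _ => Finset.sum_congr rfl fun j _ => ?_
          have : (∑ τ : Equiv.Perm (Fin n), w τ • τ.permMatrix ℝ) i j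
              = ∑ τ : Equiv.Perm (Fin n), w τ * (τ.permMatrix ℝ) i j := by
            rw [Matrix.sum_apply]
            rfl
          rw [this, Finset.sum_mul]
          exact Finset.sum_congr rfl fun τ _ => by ring
      _ = ∑ i, ∑ τ : Equiv.Perm (Fin n), ∑ j, w τ * ((τ.permMatrix ℝ) i j * c i j) :=
          Finset.sum_congr rfl fun i _ => Finset.sum_comm
      _ = ∑ τ : Equiv.Perm (Fin n), ∑ i, ∑ j, w τ * ((τ.permMatrix ℝ) i j * c i j) :=
          Finset.sum_comm
      _ = ∑ τ : Equiv.Perm (Fin n), w τ * ∑ i, c i (τ i) := by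
          refine Finset.sum_congr rfl fun τ _ => ?_
          rw [← hperm τ, Finset.mul_sum]
          exact Finset.sum_congr rfl fun i _ => by rw [Finset.mul_sum]
  by_contra h
  push_neg at h
  have hτ0 : ∃ τ : Equiv.Perm (Fin n), 0 < w τ := by
    by_contra h'
    push_neg at h'
    have : ∑ τ : Equiv.Perm (Fin n), w τ = 0 :=
      Finset.sum_eq_zero fun τ _ => le_antisymm (h' τ) (hw0 τ)
    rw [hw1] at this; norm_num at this
  obtain ⟨τ0, hτ0⟩ := hτ0
  set S := ∑ i, ∑ j, M i j * c i j with hSdef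
  have : S < S := by
    calc S = ∑ τ : Equiv.Perm (Fin n), w τ * S := by rw [← Finset.sum_mul, hw1, one_mul]
      _ < ∑ τ : Equiv.Perm (Fin n), w τ * ∑ i, c i (τ i) := by
          refine Finset.sum_lt_sum (fun τ _ => ?_) ⟨τ0, Finset.mem_univ _, ?_⟩
          · rcases (hw0 τ).eq_or_lt with h0 | h0
            · simp [← h0]
            · exact (mul_le_mul_iff_right₀ h0).2 (h τ).le
          · exact (mul_lt_mul_iff_right₀ hτ0).2 (h τ0)
      _ = S := hS.symm
  exact absurd this (lt_irrefl _)


lemma coupling_cost_lower {d N : ℕ} (hN : 0 < N) (b y : Fin N → Euc d)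
    (π : Measure (Euc d × Euc d))
    (h1 : π.map Prod.fst = (N : ℝ≥0∞)⁻¹ • ∑ j, Measure.dirac (b j))
    (h2 : π.map Prod.snd = (N : ℝ≥0∞)⁻¹ • ∑ j, Measure.dirac (y j)) :
    ∃ σ : Equiv.Perm (Fin N),
      ENNReal.ofReal ((N : ℝ)⁻¹ * ∑ j, ‖y j - b (σ j)‖ ^ 2) ≤ ∫⁻ p, edist p.1 p.2 ^ 2 ∂π := by
  classical
  have hNR : (N : ℝ) ≠ 0 := Nat.cast_ne_zero.2 hN.ne'
  set B : Finset (Euc d) := Finset.image b Finset.univ with hB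
  set Y : Finset (Euc d) := Finset.image y Finset.univ with hY
  -- π vanishes outside B × Y
  have hπ1 : π {p : Euc d × Euc d | p.1 ∉ (B : Set (Euc d))} = 0 := by
    have hms : MeasurableSet ((B : Set (Euc d))ᶜ) := B.measurableSet.compl
    have : π (Prod.fst ⁻¹' (B : Set (Euc d))ᶜ) = (π.map Prod.fst) ((B : Set (Euc d))ᶜ) :=
      (Measure.map_apply measurable_fst hms).symm
    rw [show {p : Euc d × Euc d | p.1 ∉ (B : Set (Euc d))} = Prod.fst ⁻¹' (B : Set (Euc d))ᶜ
        from rfl, this, h1]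
    rw [Measure.smul_apply, Measure.finset_sum_apply]
    have : ∀ j : Fin N, Measure.dirac (b j) ((B : Set (Euc d))ᶜ) = 0 := by
      intro j
      rw [Measure.dirac_apply' _ hms]
      simp [hB, Set.indicator_apply]
    simp [this]
  have hπ2 : π {p : Euc d × Euc d | p.2 ∉ (Y : Set (Euc d))} = 0 := by
    have hms : MeasurableSet ((Y : Set (Euc d))ᶜ) := Y.measurableSet.compl
    have : π (Prod.snd ⁻¹' (Y : Set (Euc d))ᶜ) = (π.map Prod.snd) ((Y : Set (Euc d))ᶜ) :=
      (Measure.map_apply measurable_snd hms).symm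
    rw [show {p : Euc d × Euc d | p.2 ∉ (Y : Set (Euc d))} = Prod.snd ⁻¹' (Y : Set (Euc d))ᶜ
        from rfl, this, h2]
    rw [Measure.smul_apply, Measure.finset_sum_apply]
    have : ∀ j : Fin N, Measure.dirac (y j) ((Y : Set (Euc d))ᶜ) = 0 := by
      intro j
      rw [Measure.dirac_apply' _ hms]
      simp [hY, Set.indicator_apply]
    simp [this]
  -- marginal singleton masses
  have margB : ∀ u : Euc d, (π.map Prod.fst) {u}
      = (N : ℝ≥0∞)⁻¹ * (Finset.univ.filter fun i => b i = u).card := by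
    intro u
    rw [h1, Measure.smul_apply, Measure.finset_sum_apply]
    have : ∀ j : Fin N, Measure.dirac (b j) ({u} : Set (Euc d))
        = if b j = u then 1 else 0 := by
      intro j
      rw [Measure.dirac_apply' _ (measurableSet_singleton u)]
      simp [Set.indicator_apply]
    rw [Finset.sum_congr rfl fun j _ => this j]
    rw [Finset.sum_boole]
    simp [smul_eq_mul]
  have margY : ∀ v : Euc d, (π.map Prod.snd) {v}
      = (N : ℝ≥0∞)⁻¹ * (Finset.univ.filter fun j => y j = v).card := by
    intro v
    rw [h2, Measure.smul_apply, Measure.finset_sum_apply]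
    have : ∀ j : Fin N, Measure.dirac (y j) ({v} : Set (Euc d))
        = if y j = v then 1 else 0 := by
      intro j
      rw [Measure.dirac_apply' _ (measurableSet_singleton v)]
      simp [Set.indicator_apply]
    rw [Finset.sum_congr rfl fun j _ => this j]
    rw [Finset.sum_boole]
    simp [smul_eq_mul]
  -- row sums of the singleton masses
  have rowsum : ∀ u : Euc d, ∑ v ∈ Y, π {(u, v)} = (π.map Prod.fst) {u} := by
    intro u
    have hdecomp : ({u} ×ˢ (Y : Set (Euc d))) = ⋃ v ∈ Y, {((u, v) : Euc d × Euc d)} := by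
      ext p
      constructor
      · rintro ⟨hp1, hp2⟩
        exact Set.mem_biUnion hp2
          (by rw [Set.mem_singleton_iff]; exact Prod.ext (Set.mem_singleton_iff.mp hp1) rfl)
      · intro hp
        rw [Set.mem_iUnion₂] at hp
        obtain ⟨v, hv, hpv⟩ := hp
        rw [Set.mem_singleton_iff] at hpv
        subst hpv
        exact ⟨rfl, hv⟩
    have h1' : π ({u} ×ˢ (Y : Set (Euc d))) = ∑ v ∈ Y, π {(u, v)} := by
      rw [hdecomp, measure_biUnion_finset ?_ (fun v _ => measurableSet_singleton _)]
      intro v _ v' _ hvv'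
      simp only [Function.onFun, Set.disjoint_singleton]
      exact fun h => hvv' (by simpa using congrArg Prod.snd h)
    have hsub1 : Prod.fst ⁻¹' ({u} : Set (Euc d))
        ⊆ ({u} ×ˢ (Y : Set (Euc d))) ∪ {p : Euc d × Euc d | p.2 ∉ (Y : Set (Euc d))} := by
      rintro ⟨a, c⟩ ha
      by_cases hc : c ∈ (Y : Set (Euc d))
      · exact Or.inl ⟨ha, hc⟩
      · exact Or.inr hc
    have hle1 : (π.map Prod.fst) {u} ≤ π ({u} ×ˢ (Y : Set (Euc d))) := by
      rw [Measure.map_apply measurable_fst (measurableSet_singleton u)]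
      calc π (Prod.fst ⁻¹' ({u} : Set (Euc d)))
          ≤ π (({u} ×ˢ (Y : Set (Euc d))) ∪ {p : Euc d × Euc d | p.2 ∉ (Y : Set (Euc d))}) :=
            measure_mono hsub1
        _ ≤ π ({u} ×ˢ (Y : Set (Euc d))) + π {p : Euc d × Euc d | p.2 ∉ (Y : Set (Euc d))} :=
            measure_union_le _ _
        _ = π ({u} ×ˢ (Y : Set (Euc d))) := by rw [hπ2, add_zero]
    have hle2 : π ({u} ×ˢ (Y : Set (Euc d))) ≤ (π.map Prod.fst) {u} := by
      rw [Measure.map_apply measurable_fst (measurableSet_singleton u)]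
      exact measure_mono fun p hp => hp.1
    rw [← h1', le_antisymm hle2 hle1]
  have colsum : ∀ v : Euc d, ∑ u ∈ B, π {(u, v)} = (π.map Prod.snd) {v} := by
    intro v
    have hdecomp : ((B : Set (Euc d)) ×ˢ {v}) = ⋃ u ∈ B, {((u, v) : Euc d × Euc d)} := by
      ext p
      constructor
      · rintro ⟨hp1, hp2⟩
        exact Set.mem_biUnion hp1
          (by rw [Set.mem_singleton_iff]; exact Prod.ext rfl (Set.mem_singleton_iff.mp hp2))
      · intro hp
        rw [Set.mem_iUnion₂] at hp
        obtain ⟨u, hu, hpu⟩ := hp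
        rw [Set.mem_singleton_iff] at hpu
        subst hpu
        exact ⟨hu, rfl⟩
    have h1' : π ((B : Set (Euc d)) ×ˢ {v}) = ∑ u ∈ B, π {(u, v)} := by
      rw [hdecomp, measure_biUnion_finset ?_ (fun u _ => measurableSet_singleton _)]
      intro u _ u' _ huu'
      simp only [Function.onFun, Set.disjoint_singleton]
      exact fun h => huu' (by simpa using congrArg Prod.fst h)
    have hsub1 : Prod.snd ⁻¹' ({v} : Set (Euc d))
        ⊆ ((B : Set (Euc d)) ×ˢ {v}) ∪ {p : Euc d × Euc d | p.1 ∉ (B : Set (Euc d))} := by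
      rintro ⟨a, c⟩ ha
      by_cases hc : a ∈ (B : Set (Euc d))
      · exact Or.inl ⟨hc, ha⟩
      · exact Or.inr hc
    have hle1 : (π.map Prod.snd) {v} ≤ π ((B : Set (Euc d)) ×ˢ {v}) := by
      rw [Measure.map_apply measurable_snd (measurableSet_singleton v)]
      calc π (Prod.snd ⁻¹' ({v} : Set (Euc d)))
          ≤ π (((B : Set (Euc d)) ×ˢ {v}) ∪ {p : Euc d × Euc d | p.1 ∉ (B : Set (Euc d))}) :=
            measure_mono hsub1
        _ ≤ π ((B : Set (Euc d)) ×ˢ {v}) + π {p : Euc d × Euc d | p.1 ∉ (B : Set (Euc d))} :=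
            measure_union_le _ _
        _ = π ((B : Set (Euc d)) ×ˢ {v}) := by rw [hπ1, add_zero]
    have hle2 : π ((B : Set (Euc d)) ×ˢ {v}) ≤ (π.map Prod.snd) {v} := by
      rw [Measure.map_apply measurable_snd (measurableSet_singleton v)]
      exact measure_mono fun p hp => hp.2
    rw [← h1', le_antisymm hle2 hle1]
  -- π is a probability measure
  have hπuniv : π Set.univ = 1 := by
    have hu : (π.map Prod.fst) Set.univ = π Set.univ := by
      rw [Measure.map_apply measurable_fst MeasurableSet.univ, Set.preimage_univ]
    rw [← hu, h1, Measure.smul_apply, Measure.finset_sum_apply]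
    have : ∀ j : Fin N, Measure.dirac (b j) (Set.univ : Set (Euc d)) = 1 := fun j => by simp
    rw [Finset.sum_congr rfl fun j _ => this j]
    rw [Finset.sum_const, Finset.card_univ, Fintype.card_fin, smul_eq_mul, nsmul_eq_mul, mul_one]
    exact ENNReal.inv_mul_cancel (by exact_mod_cast hN.ne') (ENNReal.natCast_ne_top N)
  have hsing : ∀ p : Euc d × Euc d, π {p} ≠ ⊤ := fun p =>
    (((measure_mono (Set.subset_univ _)).trans hπuniv.le).trans_lt ENNReal.one_lt_top).ne
  obtain ⟨t, ht⟩ : ∃ t : Euc d → Euc d → ℝ, ∀ u v, t u v = (π {(u, v)}).toReal :=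
    ⟨_, fun _ _ => rfl⟩
  obtain ⟨fB, hfB⟩ : ∃ f : Euc d → ℕ,
      ∀ u, f u = (Finset.univ.filter fun i => b i = u).card := ⟨_, fun _ => rfl⟩
  obtain ⟨fY, hfY⟩ : ∃ f : Euc d → ℕ,
      ∀ v, f v = (Finset.univ.filter fun j => y j = v).card := ⟨_, fun _ => rfl⟩
  have ht0 : ∀ u v, 0 ≤ t u v := fun u v => by rw [ht]; exact ENNReal.toReal_nonneg
  have hfBne : ∀ i : Fin N, fB (b i) ≠ 0 := by
    intro i
    rw [hfB]
    exact (Finset.card_pos.2 ⟨i, by simp⟩).ne'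
  have hfYne : ∀ j : Fin N, fY (y j) ≠ 0 := by
    intro j
    rw [hfY]
    exact (Finset.card_pos.2 ⟨j, by simp⟩).ne'
  have hfBY : ∀ u ∈ B, fB u ≠ 0 := by
    intro u hu
    rw [hB] at hu
    obtain ⟨i, _, rfl⟩ := Finset.mem_image.1 hu
    exact hfBne i
  have hfYY : ∀ v ∈ Y, fY v ≠ 0 := by
    intro v hv
    rw [hY] at hv
    obtain ⟨j, _, rfl⟩ := Finset.mem_image.1 hv
    exact hfYne j
  -- real row/column sums
  have rowR : ∀ u : Euc d, ∑ v ∈ Y, t u v = (N : ℝ)⁻¹ * fB u := by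
    intro u
    have h := rowsum u
    rw [margB u] at h
    have h' := congrArg ENNReal.toReal h
    rw [ENNReal.toReal_sum fun v _ => hsing _] at h'
    calc ∑ v ∈ Y, t u v = ∑ v ∈ Y, (π {(u, v)}).toReal :=
          Finset.sum_congr rfl fun v _ => ht u v
      _ = ((N : ℝ≥0∞)⁻¹ * ((Finset.univ.filter fun i => b i = u).card : ℝ≥0∞)).toReal := h'
      _ = (N : ℝ)⁻¹ * fB u := by
          rw [ENNReal.toReal_mul, ENNReal.toReal_inv, hfB u]
          simp
  have colR : ∀ v : Euc d, ∑ u ∈ B, t u v = (N : ℝ)⁻¹ * fY v := by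
    intro v
    have h := colsum v
    rw [margY v] at h
    have h' := congrArg ENNReal.toReal h
    rw [ENNReal.toReal_sum fun u _ => hsing _] at h'
    calc ∑ u ∈ B, t u v = ∑ u ∈ B, (π {(u, v)}).toReal :=
          Finset.sum_congr rfl fun u _ => ht u v
      _ = ((N : ℝ≥0∞)⁻¹ * ((Finset.univ.filter fun j => y j = v).card : ℝ≥0∞)).toReal := h'
      _ = (N : ℝ)⁻¹ * fY v := by
          rw [ENNReal.toReal_mul, ENNReal.toReal_inv, hfY v]
          simp
  -- the doubly stochastic matrix
  set A : Matrix (Fin N) (Fin N) ℝ :=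
    fun i j => (N : ℝ) * t (b i) (y j) / ((fB (b i) : ℝ) * (fY (y j) : ℝ)) with hA
  have hrowA : ∀ i : Fin N, ∑ j, A i j = 1 := by
    intro i
    have hstep : ∑ j, A i j = ∑ v ∈ Finset.univ.image y,
        (Finset.univ.filter fun a => y a = v).card
          • ((N : ℝ) * t (b i) v / ((fB (b i) : ℝ) * (fY v : ℝ))) :=
      Finset.sum_comp (fun v => (N : ℝ) * t (b i) v / ((fB (b i) : ℝ) * (fY v : ℝ))) y
    rw [hstep]
    have h2' : ∀ v ∈ Finset.univ.image y,
        (Finset.univ.filter fun a => y a = v).card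
          • ((N : ℝ) * t (b i) v / ((fB (b i) : ℝ) * (fY v : ℝ)))
        = (N : ℝ) * t (b i) v / (fB (b i) : ℝ) := by
      intro v hv
      rw [← hfY v, nsmul_eq_mul]
      have hne : (fY v : ℝ) ≠ 0 := Nat.cast_ne_zero.2 (hfYY v hv)
      rw [mul_comm (fB (b i) : ℝ) (fY v : ℝ), ← div_div, ← mul_div_assoc,
        mul_comm (fY v : ℝ) ((N : ℝ) * t (b i) v / (fY v : ℝ)),
        div_mul_cancel₀ _ hne]
    rw [Finset.sum_congr rfl h2']
    have hstep2 : ∑ v ∈ Y, (N : ℝ) * t (b i) v / (fB (b i) : ℝ)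
        = (N : ℝ) / (fB (b i) : ℝ) * ∑ v ∈ Y, t (b i) v := by
      rw [Finset.mul_sum]
      exact Finset.sum_congr rfl fun v _ => by ring
    rw [show (Finset.univ.image y) = Y from rfl, hstep2, rowR]
    have hne : (fB (b i) : ℝ) ≠ 0 := Nat.cast_ne_zero.2 (hfBne i)
    field_simp
  have hcolA : ∀ j : Fin N, ∑ i, A i j = 1 := by
    intro j
    have hstep : ∑ i, A i j = ∑ u ∈ Finset.univ.image b,
        (Finset.univ.filter fun a => b a = u).card
          • ((N : ℝ) * t u (y j) / ((fB u : ℝ) * (fY (y j) : ℝ))) :=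
      Finset.sum_comp (fun u => (N : ℝ) * t u (y j) / ((fB u : ℝ) * (fY (y j) : ℝ))) b
    rw [hstep]
    have h2' : ∀ u ∈ Finset.univ.image b,
        (Finset.univ.filter fun a => b a = u).card
          • ((N : ℝ) * t u (y j) / ((fB u : ℝ) * (fY (y j) : ℝ)))
        = (N : ℝ) * t u (y j) / (fY (y j) : ℝ) := by
      intro u hu
      rw [← hfB u, nsmul_eq_mul]
      have hne : (fB u : ℝ) ≠ 0 := Nat.cast_ne_zero.2 (hfBY u hu)
      rw [← div_div, ← mul_div_assoc,
        mul_comm (fB u : ℝ) ((N : ℝ) * t u (y j) / (fB u : ℝ)),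
        div_mul_cancel₀ _ hne]
    rw [Finset.sum_congr rfl h2']
    have hstep2 : ∑ u ∈ B, (N : ℝ) * t u (y j) / (fY (y j) : ℝ)
        = (N : ℝ) / (fY (y j) : ℝ) * ∑ u ∈ B, t u (y j) := by
      rw [Finset.mul_sum]
      exact Finset.sum_congr rfl fun u _ => by ring
    rw [show (Finset.univ.image b) = B from rfl, hstep2, colR]
    have hne : (fY (y j) : ℝ) ≠ 0 := Nat.cast_ne_zero.2 (hfYne j)
    field_simp
  have hAmem : A ∈ doublyStochastic ℝ (Fin N) := by
    rw [mem_doublyStochastic_iff_sum]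
    exact ⟨fun i j => div_nonneg (mul_nonneg (Nat.cast_nonneg N) (ht0 _ _))
      (mul_nonneg (Nat.cast_nonneg _) (Nat.cast_nonneg _)), hrowA, hcolA⟩
  -- cost identity
  set c : Fin N → Fin N → ℝ := fun i j => ‖y j - b i‖ ^ 2 with hc
  set Sr : ℝ := ∑ u ∈ B, ∑ v ∈ Y, t u v * ‖v - u‖ ^ 2 with hSr
  have hcost : ∑ i, ∑ j, A i j * c i j = N * Sr := by
    have hinner : ∀ i : Fin N, ∑ j, A i j * c i j
        = ∑ v ∈ Y, (N : ℝ) * t (b i) v / (fB (b i) : ℝ) * ‖v - b i‖ ^ 2 := by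
      intro i
      have hstep : ∑ j, A i j * c i j = ∑ v ∈ Finset.univ.image y,
          (Finset.univ.filter fun a => y a = v).card •
            ((N : ℝ) * t (b i) v / ((fB (b i) : ℝ) * (fY v : ℝ)) * ‖v - b i‖ ^ 2) :=
        Finset.sum_comp
          (fun v => (N : ℝ) * t (b i) v / ((fB (b i) : ℝ) * (fY v : ℝ)) * ‖v - b i‖ ^ 2) y
      rw [hstep]
      refine Finset.sum_congr rfl fun v hv => ?_
      rw [← hfY v, nsmul_eq_mul]
      have hne : (fY v : ℝ) ≠ 0 := Nat.cast_ne_zero.2 (hfYY v hv)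
      have h0 : (fY v : ℝ) * (fY v : ℝ)⁻¹ = 1 := mul_inv_cancel₀ hne
      rw [div_eq_mul_inv, div_eq_mul_inv, mul_inv]
      linear_combination ((N : ℝ) * t (b i) v * (fB (b i) : ℝ)⁻¹ * ‖v - b i‖ ^ 2) * h0
    calc ∑ i, ∑ j, A i j * c i j
        = ∑ i, ∑ v ∈ Y, (N : ℝ) * t (b i) v / (fB (b i) : ℝ) * ‖v - b i‖ ^ 2 :=
          Finset.sum_congr rfl fun i _ => hinner i
      _ = ∑ u ∈ Finset.univ.image b, (Finset.univ.filter fun a => b a = u).card •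
            ∑ v ∈ Y, (N : ℝ) * t u v / (fB u : ℝ) * ‖v - u‖ ^ 2 :=
          Finset.sum_comp (fun u => ∑ v ∈ Y, (N : ℝ) * t u v / (fB u : ℝ) * ‖v - u‖ ^ 2) b
      _ = ∑ u ∈ B, ∑ v ∈ Y, (N : ℝ) * (t u v * ‖v - u‖ ^ 2) := by
          refine Finset.sum_congr rfl fun u hu => ?_
          rw [← hfB u, nsmul_eq_mul, Finset.mul_sum]
          refine Finset.sum_congr rfl fun v _ => ?_
          have hne : (fB u : ℝ) ≠ 0 := Nat.cast_ne_zero.2 (hfBY u hu)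
          field_simp
      _ = N * Sr := by
          rw [hSr, Finset.mul_sum]
          exact Finset.sum_congr rfl fun u _ => by rw [Finset.mul_sum]
  obtain ⟨σ', hσ'⟩ := perm_le_of_doublyStochastic hAmem c
  have hre : ∑ j, ‖y j - b (σ'⁻¹ j)‖ ^ 2 = ∑ i, c i (σ' i) := by
    rw [← Equiv.sum_comp σ' (fun j => ‖y j - b (σ'⁻¹ j)‖ ^ 2)]
    refine Finset.sum_congr rfl fun i _ => ?_
    simp [hc]
  have hσ'' : ∑ j, ‖y j - b (σ'⁻¹ j)‖ ^ 2 ≤ N * Sr := by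
    rw [hre, ← hcost]
    exact hσ'
  refine ⟨σ'⁻¹, ?_⟩
  have hSr' : (N : ℝ)⁻¹ * ∑ j, ‖y j - b (σ'⁻¹ j)‖ ^ 2 ≤ Sr := by
    have := mul_le_mul_of_nonneg_left hσ'' (inv_nonneg.2 (Nat.cast_nonneg N))
    rwa [← mul_assoc, inv_mul_cancel₀ hNR, one_mul] at this
  have hSrsum : Sr = ∑ p ∈ B ×ˢ Y, t p.1 p.2 * ‖p.2 - p.1‖ ^ 2 := by
    rw [hSr, Finset.sum_product]
  have hcostlb : ENNReal.ofReal Sr ≤ ∫⁻ p, edist p.1 p.2 ^ 2 ∂π := by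
    have hmono : ∫⁻ p in (↑(B ×ˢ Y) : Set (Euc d × Euc d)), edist p.1 p.2 ^ 2 ∂π
        ≤ ∫⁻ p, edist p.1 p.2 ^ 2 ∂π := lintegral_mono' Measure.restrict_le_self le_rfl
    have hfin : ∫⁻ p in (↑(B ×ˢ Y) : Set (Euc d × Euc d)), edist p.1 p.2 ^ 2 ∂π
        = ∑ p ∈ B ×ˢ Y, edist p.1 p.2 ^ 2 * π {p} := lintegral_finset _ _
    refine le_trans (le_of_eq ?_) (hfin ▸ hmono)
    rw [hSrsum]
    calc ENNReal.ofReal (∑ p ∈ B ×ˢ Y, t p.1 p.2 * ‖p.2 - p.1‖ ^ 2)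
        = ∑ p ∈ B ×ˢ Y, ENNReal.ofReal (t p.1 p.2 * ‖p.2 - p.1‖ ^ 2) :=
          ENNReal.ofReal_sum_of_nonneg fun p _ => mul_nonneg (ht0 _ _) (by positivity)
      _ = ∑ p ∈ B ×ˢ Y, edist p.1 p.2 ^ 2 * π {p} := by
          refine Finset.sum_congr rfl fun p _ => ?_
          rw [ht, ENNReal.ofReal_mul ENNReal.toReal_nonneg, ENNReal.ofReal_toReal (by
            rw [Prod.mk.eta]; exact hsing p)]
          rw [show ENNReal.ofReal (‖p.2 - p.1‖ ^ 2) = edist p.1 p.2 ^ 2 by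
            rw [edist_dist, ← ENNReal.ofReal_pow dist_nonneg, dist_eq_norm, norm_sub_rev]]
          rw [Prod.mk.eta, mul_comm]
  exact le_trans (ENNReal.ofReal_le_ofReal hSr') hcostlb

lemma W2sq_aux_ne_top {d N : ℕ} (hN : 0 < N) (b y : Fin N → Euc d) :
    (⨅ (π : Measure (Euc d × Euc d))
      (_ : π.map Prod.fst = (N : ℝ≥0∞)⁻¹ • ∑ j, Measure.dirac (b j) ∧
           π.map Prod.snd = (N : ℝ≥0∞)⁻¹ • ∑ j, Measure.dirac (y j)),
      ∫⁻ p, edist p.1 p.2 ^ 2 ∂π) ≠ ⊤ := by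
  classical
  set π₀ : Measure (Euc d × Euc d) := (N : ℝ≥0∞)⁻¹ • ∑ j, Measure.dirac (b j, y j) with hπ₀
  have hm1 : π₀.map Prod.fst = (N : ℝ≥0∞)⁻¹ • ∑ j, Measure.dirac (b j) := by
    ext s hs
    rw [Measure.map_apply measurable_fst hs, hπ₀, Measure.smul_apply, Measure.smul_apply,
      Measure.finset_sum_apply, Measure.finset_sum_apply]
    congr 1
    refine Finset.sum_congr rfl fun j _ => ?_
    rw [Measure.dirac_apply' _ (measurable_fst hs), Measure.dirac_apply' _ hs]
    simp [Set.indicator_apply, Set.mem_preimage]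
  have hm2 : π₀.map Prod.snd = (N : ℝ≥0∞)⁻¹ • ∑ j, Measure.dirac (y j) := by
    ext s hs
    rw [Measure.map_apply measurable_snd hs, hπ₀, Measure.smul_apply, Measure.smul_apply,
      Measure.finset_sum_apply, Measure.finset_sum_apply]
    congr 1
    refine Finset.sum_congr rfl fun j _ => ?_
    rw [Measure.dirac_apply' _ (measurable_snd hs), Measure.dirac_apply' _ hs]
    simp [Set.indicator_apply, Set.mem_preimage]
  have hcost : ∫⁻ p, edist p.1 p.2 ^ 2 ∂π₀
      = (N : ℝ≥0∞)⁻¹ * ∑ j, edist (b j) (y j) ^ 2 := by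
    rw [hπ₀, lintegral_smul_measure, lintegral_finset_sum_measure]
    congr 1
    exact Finset.sum_congr rfl fun j _ => lintegral_dirac _ _
  have hle : (⨅ (π : Measure (Euc d × Euc d))
      (_ : π.map Prod.fst = (N : ℝ≥0∞)⁻¹ • ∑ j, Measure.dirac (b j) ∧
           π.map Prod.snd = (N : ℝ≥0∞)⁻¹ • ∑ j, Measure.dirac (y j)),
      ∫⁻ p, edist p.1 p.2 ^ 2 ∂π) ≤ ∫⁻ p, edist p.1 p.2 ^ 2 ∂π₀ :=
    iInf_le_of_le π₀ (iInf_le_of_le ⟨hm1, hm2⟩ le_rfl)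
  refine ne_top_of_le_ne_top ?_ (hle.trans hcost.le)
  refine ENNReal.mul_ne_top (by simp [hN.ne']) ?_
  exact (ENNReal.sum_lt_top.mpr fun j _ => ENNReal.pow_lt_top (edist_lt_top _ _)).ne

lemma integrable_of_continuous {d : ℕ} {X : Set (Euc d)} (hX : IsCompact X)
    {Leb : Measure (Euc d)} (hprob : IsProbabilityMeasure Leb)
    (hLeb : Leb = (volume X)⁻¹ • volume.restrict X)
    {F : Type*} [NormedAddCommGroup F] {f : Euc d → F} (hf : Continuous f) :
    Integrable f Leb := by
  have h1 : Leb Set.univ = 1 := measure_univ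
  rw [hLeb, Measure.smul_apply, Measure.restrict_apply_univ] at h1
  have h0 : volume X ≠ 0 := by
    rintro h; rw [h] at h1; simp at h1
  have hint : IntegrableOn f X volume := hf.continuousOn.integrableOn_compact hX
  rw [hLeb]
  exact hint.smul_measure (ENNReal.inv_ne_top.2 h0)

/-- Given an equal-mass measurable partition `(P_j)` of a compact domain `X`
with barycenters `b_j`, and points `y_1, …, y_N`, there is a permutation `σ` such that
`Σ_j ∫_{P_{σ(j)}} |y_j − x|² ≤ Σ_j ∫_{P_j} |b_j − x|² + W₂²(ν_N, η_N)`, where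
`ν_N = (1/N)Σδ_{b_j}` and `η_N = (1/N)Σδ_{y_j}`; and if each `P_j` has diameter at most
`C_P N^{−1/d}`, the left-hand side is at most `C_P² N^{−2/d} + W₂²(ν_N, η_N)`. -/
theorem stmt_14 {d N : ℕ} (hd : 1 ≤ d) (hN : 1 ≤ N)
    (X : Set (Euc d)) (hX : IsCompact X)
    (Leb : Measure (Euc d)) (hprob : IsProbabilityMeasure Leb)
    (hLeb : Leb = (volume X)⁻¹ • volume.restrict X)
    (P : Fin N → Set (Euc d)) (hPmeas : ∀ j, MeasurableSet (P j))
    (hPmass : ∀ j, Leb (P j) = 1 / N)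
    (hPdisj : Pairwise (Function.onFun Disjoint P)) (hPcover : (⋃ j, P j) = X)
    (b : Fin N → Euc d) (hb : ∀ j, b j = (N : ℝ) • ∫ x in P j, x ∂Leb)
    (y : Fin N → Euc d) :
    ∃ σ : Equiv.Perm (Fin N),
      (∑ j, ∫ x in P (σ j), ‖y j - x‖ ^ 2 ∂Leb) ≤
          (∑ j, ∫ x in P j, ‖b j - x‖ ^ 2 ∂Leb) +
            (W2sq ((N : ℝ≥0∞)⁻¹ • ∑ j, Measure.dirac (b j))
              ((N : ℝ≥0∞)⁻¹ • ∑ j, Measure.dirac (y j))).toReal ∧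
      ∀ CP : ℝ, (∀ j, Metric.diam (P j) ≤ CP * (N : ℝ) ^ (-(1 : ℝ) / d)) →
        (∑ j, ∫ x in P (σ j), ‖y j - x‖ ^ 2 ∂Leb) ≤
          CP ^ 2 * (N : ℝ) ^ (-(2 : ℝ) / d) +
            (W2sq ((N : ℝ≥0∞)⁻¹ • ∑ j, Measure.dirac (b j))
              ((N : ℝ≥0∞)⁻¹ • ∑ j, Measure.dirac (y j))).toReal := by
  classical
  have hNpos : 0 < N := hN
  have hNR : (N : ℝ) ≠ 0 := Nat.cast_ne_zero.2 hNpos.ne'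
  have hPX : ∀ k, P k ⊆ X := fun k => hPcover ▸ Set.subset_iUnion P k
  have hmass : ∀ k, (Leb (P k)).toReal = (N : ℝ)⁻¹ := by
    intro k
    rw [hPmass k, one_div, ENNReal.toReal_inv]
    simp
  have hcen : ∀ k, ∫ x in P k, x ∂Leb = (N : ℝ)⁻¹ • b k := by
    intro k
    rw [hb k, smul_smul, inv_mul_cancel₀ hNR, one_smul]
  have hid : Integrable (fun x : Euc d => x) Leb :=
    integrable_of_continuous hX hprob hLeb continuous_id
  have hzero : ∀ k, ∫ x in P k, (b k - x) ∂Leb = 0 := by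
    intro k
    rw [integral_sub ((integrable_const (b k)).integrableOn) hid.integrableOn,
      setIntegral_const, measureReal_def, hmass k, hcen k, sub_self]
  have hexp : ∀ (k : Fin N) (v : Euc d),
      ∫ x in P k, ‖v - x‖ ^ 2 ∂Leb
        = (∫ x in P k, ‖b k - x‖ ^ 2 ∂Leb) + (N : ℝ)⁻¹ * ‖v - b k‖ ^ 2 := by
    intro k v
    have hpt : ∀ x : Euc d, ‖v - x‖ ^ 2
        = ‖b k - x‖ ^ 2 + ((2 : ℝ) * inner ℝ (v - b k) (b k - x) + ‖v - b k‖ ^ 2) := by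
      intro x
      have h := norm_add_sq_real (v - b k) (b k - x)
      rw [sub_add_sub_cancel] at h
      rw [h]; ring
    have hI1 : Integrable (fun x : Euc d => ‖b k - x‖ ^ 2) Leb :=
      integrable_of_continuous hX hprob hLeb (by fun_prop)
    have hI2 : Integrable (fun x : Euc d => (2 : ℝ) * inner ℝ (v - b k) (b k - x)) Leb :=
      integrable_of_continuous hX hprob hLeb
        (continuous_const.mul (Continuous.inner continuous_const
          (continuous_const.sub continuous_id)))
    have hIg : Integrable (fun x : Euc d => b k - x) Leb :=
      integrable_of_continuous hX hprob hLeb (by fun_prop)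
    have hI3 : Integrable
        (fun x : Euc d => (2 : ℝ) * inner ℝ (v - b k) (b k - x) + ‖v - b k‖ ^ 2) Leb :=
      hI2.add (integrable_const _)
    rw [show ∫ x in P k, ‖v - x‖ ^ 2 ∂Leb
        = ∫ x in P k, (‖b k - x‖ ^ 2
            + ((2 : ℝ) * inner ℝ (v - b k) (b k - x) + ‖v - b k‖ ^ 2)) ∂Leb from
      integral_congr_ae (Filter.Eventually.of_forall fun x => hpt x)]
    rw [integral_add hI1.integrableOn hI3.integrableOn,
      integral_add hI2.integrableOn ((integrable_const _).integrableOn)]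
    have hinner : ∫ x in P k, (2 : ℝ) * inner ℝ (v - b k) (b k - x) ∂Leb = 0 := by
      rw [integral_const_mul, integral_inner hIg.integrableOn (v - b k), hzero k,
        inner_zero_right, mul_zero]
    rw [hinner, zero_add, setIntegral_const, measureReal_def, hmass k, smul_eq_mul]
  have hLHS : ∀ σ : Equiv.Perm (Fin N),
      ∑ j, ∫ x in P (σ j), ‖y j - x‖ ^ 2 ∂Leb
        = (∑ k, ∫ x in P k, ‖b k - x‖ ^ 2 ∂Leb)
          + (N : ℝ)⁻¹ * ∑ j, ‖y j - b (σ j)‖ ^ 2 := by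
    intro σ
    have h1 : ∀ j, ∫ x in P (σ j), ‖y j - x‖ ^ 2 ∂Leb
        = (∫ x in P (σ j), ‖b (σ j) - x‖ ^ 2 ∂Leb) + (N : ℝ)⁻¹ * ‖y j - b (σ j)‖ ^ 2 :=
      fun j => hexp (σ j) (y j)
    rw [Finset.sum_congr rfl fun j _ => h1 j, Finset.sum_add_distrib]
    congr 1
    · exact Equiv.sum_comp σ (fun k => ∫ x in P k, ‖b k - x‖ ^ 2 ∂Leb)
    · rw [Finset.mul_sum]
  obtain ⟨σ₀, -, hσ₀⟩ := Finset.exists_min_image Finset.univ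
    (fun σ : Equiv.Perm (Fin N) => ∑ j, ‖y j - b (σ j)‖ ^ 2) ⟨1, Finset.mem_univ 1⟩
  have hWne : W2sq ((N : ℝ≥0∞)⁻¹ • ∑ j, Measure.dirac (b j))
      ((N : ℝ≥0∞)⁻¹ • ∑ j, Measure.dirac (y j)) ≠ ⊤ := by
    rw [W2sq]
    exact W2sq_aux_ne_top hNpos b y
  have hkey : ENNReal.ofReal ((N : ℝ)⁻¹ * ∑ j, ‖y j - b (σ₀ j)‖ ^ 2)
      ≤ W2sq ((N : ℝ≥0∞)⁻¹ • ∑ j, Measure.dirac (b j))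
          ((N : ℝ≥0∞)⁻¹ • ∑ j, Measure.dirac (y j)) := by
    rw [W2sq]
    refine le_iInf₂ fun π hπ => ?_
    obtain ⟨σ, hσ⟩ := coupling_cost_lower hNpos b y π hπ.1 hπ.2
    refine le_trans (ENNReal.ofReal_le_ofReal ?_) hσ
    exact mul_le_mul_of_nonneg_left (hσ₀ σ (Finset.mem_univ σ))
      (inv_nonneg.2 (Nat.cast_nonneg N))
  have hkeyR : (N : ℝ)⁻¹ * ∑ j, ‖y j - b (σ₀ j)‖ ^ 2
      ≤ (W2sq ((N : ℝ≥0∞)⁻¹ • ∑ j, Measure.dirac (b j))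
          ((N : ℝ≥0∞)⁻¹ • ∑ j, Measure.dirac (y j))).toReal := by
    have h := ENNReal.toReal_mono hWne hkey
    rwa [ENNReal.toReal_ofReal (by positivity)] at h
  refine ⟨σ₀, ?_, ?_⟩
  · rw [hLHS σ₀]
    exact add_le_add_right hkeyR _
  · intro CP hCP
    rw [hLHS σ₀]
    refine add_le_add ?_ hkeyR
    have hNd : ((N : ℝ) ^ (-(1 : ℝ) / d)) ^ 2 = (N : ℝ) ^ (-(2 : ℝ) / d) := by
      rw [← Real.rpow_natCast ((N : ℝ) ^ (-(1 : ℝ) / d)) 2,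
        ← Real.rpow_mul (Nat.cast_nonneg N)]
      congr 1
      push_cast
      ring
    have hbd : ∀ k, Bornology.IsBounded (P k) := fun k => hX.isBounded.subset (hPX k)
    have hdist : ∀ k, ∀ x ∈ P k, ‖b k - x‖ ≤ Metric.diam (P k) := by
      intro k x hx
      have hintsub : ∫ x' in P k, (x' - x) ∂Leb = (N : ℝ)⁻¹ • (b k - x) := by
        rw [integral_sub hid.integrableOn ((integrable_const x).integrableOn),
          hcen k, setIntegral_const, measureReal_def, hmass k, ← smul_sub]
      have hnorm : ‖b k - x‖ = N * ‖∫ x' in P k, (x' - x) ∂Leb‖ := by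
        rw [hintsub, norm_smul, norm_inv, Real.norm_natCast, ← mul_assoc,
          mul_inv_cancel₀ hNR, one_mul]
      rw [hnorm]
      have h1 : ‖∫ x' in P k, (x' - x) ∂Leb‖ ≤ ∫ x' in P k, ‖x' - x‖ ∂Leb :=
        norm_integral_le_integral_norm _
      have h2 : ∫ x' in P k, ‖x' - x‖ ∂Leb ≤ ∫ x' in P k, Metric.diam (P k) ∂Leb := by
        refine setIntegral_mono_on
          ((integrable_of_continuous hX hprob hLeb (by fun_prop)).integrableOn)
          ((integrable_const _).integrableOn) (hPmeas k) ?_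
        intro x' hx'
        rw [← dist_eq_norm]
        exact Metric.dist_le_diam_of_mem (hbd k) hx' hx
      have h3 : ∫ x' in P k, Metric.diam (P k) ∂Leb = (N : ℝ)⁻¹ * Metric.diam (P k) := by
        rw [setIntegral_const, measureReal_def, hmass k, smul_eq_mul]
      calc (N : ℝ) * ‖∫ x' in P k, (x' - x) ∂Leb‖
          ≤ (N : ℝ) * ((N : ℝ)⁻¹ * Metric.diam (P k)) :=
            mul_le_mul_of_nonneg_left (le_trans h1 (le_trans h2 h3.le)) (Nat.cast_nonneg N)
        _ = Metric.diam (P k) := by rw [← mul_assoc, mul_inv_cancel₀ hNR, one_mul]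
    have hsq : ∀ k, ∫ x in P k, ‖b k - x‖ ^ 2 ∂Leb
        ≤ (N : ℝ)⁻¹ * (CP ^ 2 * (N : ℝ) ^ (-(2 : ℝ) / d)) := by
      intro k
      have h1 : ∫ x in P k, ‖b k - x‖ ^ 2 ∂Leb
          ≤ ∫ x in P k, (Metric.diam (P k)) ^ 2 ∂Leb := by
        refine setIntegral_mono_on
          ((integrable_of_continuous hX hprob hLeb (by fun_prop)).integrableOn)
          ((integrable_const _).integrableOn) (hPmeas k) ?_
        intro x hx
        exact pow_le_pow_left₀ (norm_nonneg _) (hdist k x hx) 2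
      refine le_trans h1 ?_
      rw [setIntegral_const, measureReal_def, hmass k, smul_eq_mul]
      refine mul_le_mul_of_nonneg_left ?_ (inv_nonneg.2 (Nat.cast_nonneg N))
      calc (Metric.diam (P k)) ^ 2 ≤ (CP * (N : ℝ) ^ (-(1 : ℝ) / d)) ^ 2 :=
            pow_le_pow_left₀ Metric.diam_nonneg (hCP k) 2
        _ = CP ^ 2 * (N : ℝ) ^ (-(2 : ℝ) / d) := by rw [mul_pow, hNd]
    calc ∑ k, ∫ x in P k, ‖b k - x‖ ^ 2 ∂Leb
        ≤ ∑ _k : Fin N, (N : ℝ)⁻¹ * (CP ^ 2 * (N : ℝ) ^ (-(2 : ℝ) / d)) :=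
          Finset.sum_le_sum fun k _ => hsq k
      _ = CP ^ 2 * (N : ℝ) ^ (-(2 : ℝ) / d) := by
          rw [Finset.sum_const, Finset.card_univ, Fintype.card_fin, nsmul_eq_mul,
            ← mul_assoc, mul_inv_cancel₀ hNR, one_mul]

end
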